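/- Let N ≥ 0, M ≥ 0, N_B > 0 and 0 < κ < 1 be real, and set D = (1−κ)·N_B + 1, η(κ) = κ/D and G(κ) = D. Then η has derivative η′(κ) = (N_B+1)/D² and G has derivative G′(κ) = −N_B at κ, and N·η′(κ)²/(η(κ)·(1−η(κ))) + (η(κ)·N + M)·G′(κ)²/(G(κ)·(G(κ)−1)) = N·((1+κ²)·N_B + 1)/(κ·(1−κ)·D²) + M·N_B/((1−κ)·D). In particular, the universal QFI upper bound of the paper's Theorem 2 for transmittance sensing of the thermal loss channel with passive signature equals this expression. -/

import Mathlib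

/-- Specialization of the universal QFI upper bound (Theorem 2 of the paper) to
transmittance sensing of the thermal loss channel with passive signature: with
`D = (1−κ)N_B + 1`, `η(κ) = κ/D` and `G(κ) = D`, the derivatives are
`η'(κ) = (N_B+1)/D²` and `G'(κ) = −N_B`, and the bound
`N η'²/(η(1−η)) + (ηN+M) G'²/(G(G−1))` equals
`N((1+κ²)N_B+1)/(κ(1−κ)D²) + M N_B/((1−κ)D)`. -/
theorem stmt_13 (N M NB κ : ℝ) (hN : 0 ≤ N) (hM : 0 ≤ M) (hNB : 0 < NB)
    (hκ0 : 0 < κ) (hκ1 : κ < 1) (D : ℝ) (hD : D = (1 - κ) * NB + 1) :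
    HasDerivAt (fun x : ℝ => x / ((1 - x) * NB + 1)) ((NB + 1) / D ^ 2) κ ∧
    HasDerivAt (fun x : ℝ => (1 - x) * NB + 1) (-NB) κ ∧
    N * ((NB + 1) / D ^ 2) ^ 2 / ((κ / D) * (1 - κ / D))
      + ((κ / D) * N + M) * (-NB) ^ 2 / (D * (D - 1))
      = N * ((1 + κ ^ 2) * NB + 1) / (κ * (1 - κ) * D ^ 2)
        + M * NB / ((1 - κ) * D) := by
  have hDpos : 0 < D := by nlinarith
  have hDne : D ≠ 0 := ne_of_gt hDpos
  have hden : (1 - κ) * NB + 1 ≠ 0 := by rw [← hD]; exact hDne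
  have hG : HasDerivAt (fun x : ℝ => (1 - x) * NB + 1) (-NB) κ := by
    simpa using (((hasDerivAt_const κ (1:ℝ)).sub (hasDerivAt_id κ)).mul_const NB).add_const 1
  refine ⟨?_, hG, ?_⟩
  · have h := (hasDerivAt_id κ).div hG hden
    have heq : (1 * ((1 - κ) * NB + 1) - κ * -NB) / ((1 - κ) * NB + 1) ^ 2
        = (NB + 1) / D ^ 2 := by
      rw [hD]; congr 1; ring
    simpa only [Pi.div_def, id_eq, heq] using h
  · have hκne : κ ≠ 0 := ne_of_gt hκ0
    have h1κ : (0:ℝ) < 1 - κ := by linarith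
    have hDκ : D - κ = (1 - κ) * (NB + 1) := by rw [hD]; ring
    have hDκne : D - κ ≠ 0 := by rw [hDκ]; positivity
    have hD1 : D - 1 = (1 - κ) * NB := by rw [hD]; ring
    have hD1ne : D - 1 ≠ 0 := by rw [hD1]; positivity
    have h1 : 1 - κ / D = (D - κ) / D := by field_simp
    rw [h1, hD1]
    field_simp
    rw [hDκ]
    ring
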